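/- For every positive real number u and every positive integer m, the integral over x from 0 to infinity of x^m / ((x+1)^(m+1) (x u + 1)) dx equals ((-1)^m / (u-1)^(m+1)) · (log u - ∑_{j=1}^m (-1)^(j+1) (u-1)^j / j), provided u ≠ 1. -/

import Mathlib

lemma aux_pos (u : ℝ) (hu : 0 < u) {z : ℝ} (h0 : 0 ≤ z) (h1 : z ≤ 1) :
    0 < 1 + (u - 1) * z := by nlinarith [mul_nonneg h0 hu.le]

lemma aux_integrable (u : ℝ) (hu : 0 < u) (m : ℕ) :
    IntervalIntegrable (fun z => z ^ m / (1 + (u - 1) * z)) MeasureTheory.volume 0 1 := by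
  apply ContinuousOn.intervalIntegrable
  apply ContinuousOn.div (by fun_prop) (by fun_prop)
  intro z hz
  rw [Set.uIcc_of_le zero_le_one] at hz
  exact (aux_pos u hu hz.1 hz.2).ne'

lemma aux_J (u : ℝ) (hu : 0 < u) (hu1 : u ≠ 1) (m : ℕ) :
    ∫ z in (0:ℝ)..1, z ^ m / (1 + (u - 1) * z) =
      (-1) ^ m / (u - 1) ^ (m + 1) *
        (Real.log u - ∑ j ∈ Finset.Icc 1 m, (-1) ^ (j + 1) * (u - 1) ^ j / (j : ℝ)) := by
  have ha : u - 1 ≠ 0 := sub_ne_zero.mpr hu1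
  induction m with
  | zero =>
    simp only [pow_zero]
    rw [show Finset.Icc 1 0 = ∅ by rfl, Finset.sum_empty, sub_zero]
    rw [intervalIntegral.integral_eq_sub_of_hasDerivAt
      (f := fun z => Real.log (1 + (u - 1) * z) / (u - 1)) ?_ ?_]
    · norm_num
      ring
    · intro z hz
      rw [Set.uIcc_of_le zero_le_one] at hz
      have hpos := aux_pos u hu hz.1 hz.2
      have h1 : HasDerivAt (fun z : ℝ => 1 + (u - 1) * z) (u - 1) z := by
        simpa using ((hasDerivAt_id z).const_mul (u - 1)).const_add 1
      have h2 := (Real.hasDerivAt_log hpos.ne').comp z h1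
      have h3 := h2.div_const (u - 1)
      refine h3.congr_deriv ?_
      field_simp
    · have := aux_integrable u hu 0
      simpa using this
  | succ m ih =>
    have key : Set.EqOn (fun z => z ^ (m + 1) / (1 + (u - 1) * z))
        (fun z => z ^ m / (u - 1) - (1 / (u - 1)) * (z ^ m / (1 + (u - 1) * z)))
        (Set.uIcc (0:ℝ) 1) := by
      intro z hz
      rw [Set.uIcc_of_le zero_le_one] at hz
      have hpos := aux_pos u hu hz.1 hz.2
      field_simp
      ring
    rw [intervalIntegral.integral_congr key,
      intervalIntegral.integral_sub (by
        apply ContinuousOn.intervalIntegrable; fun_prop)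
        ((aux_integrable u hu m).const_mul _),
      intervalIntegral.integral_div, integral_pow,
      intervalIntegral.integral_const_mul, ih,
      Finset.sum_Icc_succ_top (by omega : 1 ≤ m + 1)]
    have hm1 : ((m:ℝ) + 1) ≠ 0 := by positivity
    rcases Nat.even_or_odd m with hpar | hpar
    · have e1 : ((-1:ℝ)) ^ m = 1 := hpar.neg_one_pow
      have e2 : ((-1:ℝ)) ^ (m + 1) = -1 := by rw [pow_succ, e1]; ring
      have e3 : ((-1:ℝ)) ^ (m + 1 + 1) = 1 := by rw [pow_succ, e2]; ring
      rw [e1, e2, e3]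
      push_cast
      field_simp
      ring
    · have e1 : ((-1:ℝ)) ^ m = -1 := hpar.neg_one_pow
      have e2 : ((-1:ℝ)) ^ (m + 1) = 1 := by rw [pow_succ, e1]; ring
      have e3 : ((-1:ℝ)) ^ (m + 1 + 1) = -1 := by rw [pow_succ, e2]; ring
      rw [e1, e2, e3]
      push_cast
      field_simp
      ring

theorem integral_modified_log (u : ℝ) (hu : 0 < u) (hu1 : u ≠ 1) (m : ℕ) (hm : 1 ≤ m) :
    ∫ x in Set.Ioi (0:ℝ), x ^ m / ((x + 1) ^ (m + 1) * (x * u + 1)) =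
      (-1) ^ m / (u - 1) ^ (m + 1) *
        (Real.log u - ∑ j ∈ Finset.Icc 1 m, (-1) ^ (j + 1) * (u - 1) ^ j / (j : ℝ)) := by
  have himg : (fun z : ℝ => z / (1 - z)) '' Set.Ioo 0 1 = Set.Ioi 0 := by
    ext y
    simp only [Set.mem_image, Set.mem_Ioo, Set.mem_Ioi]
    constructor
    · rintro ⟨z, ⟨h0, h1⟩, rfl⟩
      exact div_pos h0 (by linarith)
    · intro hy
      refine ⟨y / (1 + y), ⟨by positivity, ?_⟩, ?_⟩
      · rw [div_lt_one (by linarith)]; linarith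
      · field_simp
        ring
  have hderiv : ∀ z ∈ Set.Ioo (0:ℝ) 1,
      HasDerivWithinAt (fun z : ℝ => z / (1 - z)) (1 / (1 - z) ^ 2) (Set.Ioo 0 1) z := by
    intro z hz
    have hne : (1 : ℝ) - z ≠ 0 := by simp only [Set.mem_Ioo] at hz; intro h; linarith [hz.2]
    have h := (hasDerivAt_id z).div ((hasDerivAt_const z (1:ℝ)).sub (hasDerivAt_id z)) hne
    simp only [id_eq] at h
    have h2 : HasDerivAt (fun z : ℝ => z / (1 - z)) (1 / (1 - z) ^ 2) z := by
      refine h.congr_deriv ?_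
      simp only [Pi.sub_apply, id_eq]
      ring
    exact h2.hasDerivWithinAt
  have hinj : Set.InjOn (fun z : ℝ => z / (1 - z)) (Set.Ioo 0 1) := by
    intro z1 h1 z2 h2 heq
    simp only [Set.mem_Ioo] at h1 h2
    have hne1 : (1:ℝ) - z1 ≠ 0 := by intro h; linarith [h1.2]
    have hne2 : (1:ℝ) - z2 ≠ 0 := by intro h; linarith [h2.2]
    rw [div_eq_div_iff hne1 hne2] at heq
    nlinarith [heq]
  rw [← himg, MeasureTheory.integral_image_eq_integral_abs_deriv_smul
    measurableSet_Ioo hderiv hinj]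
  have hcongr : ∀ z ∈ Set.Ioo (0:ℝ) 1,
      |1 / (1 - z) ^ 2| • ((z / (1 - z)) ^ m /
        ((z / (1 - z) + 1) ^ (m + 1) * (z / (1 - z) * u + 1))) =
      z ^ m / (1 + (u - 1) * z) := by
    intro z hz
    simp only [Set.mem_Ioo] at hz
    have h1z : (0:ℝ) < 1 - z := by linarith [hz.2]
    have huz : (0:ℝ) < 1 + (u - 1) * z := aux_pos u hu hz.1.le hz.2.le
    have habs : |1 / (1 - z) ^ 2| = 1 / (1 - z) ^ 2 := abs_of_pos (by positivity)
    rw [habs, smul_eq_mul]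
    rw [show z / (1 - z) + 1 = 1 / (1 - z) by field_simp; ring,
        show z / (1 - z) * u + 1 = (1 + (u - 1) * z) / (1 - z) by field_simp; ring]
    rw [div_pow, div_pow, one_pow]
    field_simp
    ring
  rw [MeasureTheory.setIntegral_congr_fun measurableSet_Ioo hcongr]
  have := aux_J u hu hu1 m
  rw [intervalIntegral.integral_of_le zero_le_one,
    MeasureTheory.integral_Ioc_eq_integral_Ioo] at this
  exact this
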